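/- arXiv:math/0606501 — 2 statements merged into one kernel-verified Lean document; each statement's English description precedes it below -/
import Mathlib

section
/- There is a bijection between the set D_{f,k} of f-diagrams with exactly k arcs in each row and the product S_{f-2k} × J_{f,k} × J_{f,k}, where S_{f-2k} is the symmetric group on f-2k letters and J_{f,k} is the set of (f,k)-junctions. -/
/-- An `f`-diagram: a perfect matching on the `2f` vertices
`Fin f ⊕ Fin f` (top row `inl`, bottom row `inr`), modeled as a
fixed-point-free involution. -/
def IsBrauerDiagram {f : ℕ} (σ : Equiv.Perm (Fin f ⊕ Fin f)) : Prop :=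
  (∀ v, σ v ≠ v) ∧ (∀ v, σ (σ v) = v)

/-- A diagram lies in `D_{f,k}` if it has exactly `k` arcs in the top row,
i.e. `2k` top-row vertices are matched to top-row vertices. -/
def HasTopArcs {f : ℕ} (k : ℕ) (σ : Equiv.Perm (Fin f ⊕ Fin f)) : Prop :=
  Nat.card {i : Fin f // (σ (Sum.inl i)).isLeft} = 2 * k

/-- An `(f,k)`-junction: `k` pairwise disjoint 2-element subsets of `Fin f`. -/
def IsJunction {f : ℕ} (k : ℕ) (M : Finset (Finset (Fin f))) : Prop :=
  M.card = k ∧ (∀ e ∈ M, e.card = 2) ∧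
    ∀ e ∈ M, ∀ e' ∈ M, e ≠ e' → Disjoint e e'

namespace BrauerAux

open Finset

variable {f k : ℕ}

noncomputable def jpartner (M : Finset (Finset (Fin f))) (i : Fin f) : Fin f :=
  if h : ∃ j, j ≠ i ∧ ∃ e ∈ M, i ∈ e ∧ j ∈ e then h.choose else i

def jsupp (M : Finset (Finset (Fin f))) : Finset (Fin f) := M.biUnion fun e => e

lemma mem_jsupp {M : Finset (Finset (Fin f))} {i : Fin f} :
    i ∈ jsupp M ↔ ∃ e ∈ M, i ∈ e := by simp [jsupp]

lemma jpartner_eq {M : Finset (Finset (Fin f))} (hM : IsJunction k M)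
    {e : Finset (Fin f)} {i j : Fin f} (he : e ∈ M) (hi : i ∈ e) (hj : j ∈ e) (hji : j ≠ i) :
    jpartner M i = j := by
  have h : ∃ j, j ≠ i ∧ ∃ e ∈ M, i ∈ e ∧ j ∈ e := ⟨j, hji, e, he, hi, hj⟩
  rw [jpartner, dif_pos h]
  obtain ⟨hne, e', he', hi', hj'⟩ := h.choose_spec
  have hee : e' = e := by
    by_contra hc
    exact Finset.disjoint_left.mp (hM.2.2 e' he' e he hc) hi' hi
  subst hee
  obtain ⟨a, b, hab, habe⟩ := Finset.card_eq_two.mp (hM.2.1 e' he')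
  subst habe
  simp only [Finset.mem_insert, Finset.mem_singleton] at hi hj hj'
  rcases hi with rfl | rfl <;> rcases hj with rfl | rfl <;> simp_all

lemma pair_mem_of_mem {M : Finset (Finset (Fin f))} (hM : IsJunction k M)
    {e : Finset (Fin f)} {i : Fin f} (he : e ∈ M) (hi : i ∈ e) :
    jpartner M i ≠ i ∧ jpartner M i ∈ e ∧ ({i, jpartner M i} : Finset (Fin f)) = e := by
  obtain ⟨a, b, hab, habe⟩ := Finset.card_eq_two.mp (hM.2.1 e he)
  subst habe
  simp only [Finset.mem_insert, Finset.mem_singleton] at hi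
  rcases hi with rfl | rfl
  · have hp := jpartner_eq hM he (by simp) (j := b) (by simp) hab.symm
    rw [hp]
    exact ⟨hab.symm, by simp, rfl⟩
  · have hp := jpartner_eq hM he (by simp) (j := a) (by simp) hab
    rw [hp]
    exact ⟨hab, by simp, by rw [Finset.pair_comm]⟩

lemma jpartner_mem_jsupp {M : Finset (Finset (Fin f))} (hM : IsJunction k M)
    {i : Fin f} (hi : i ∈ jsupp M) : jpartner M i ∈ jsupp M := by
  obtain ⟨e, he, hie⟩ := mem_jsupp.mp hi
  exact mem_jsupp.mpr ⟨e, he, (pair_mem_of_mem hM he hie).2.1⟩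

lemma jpartner_ne {M : Finset (Finset (Fin f))} (hM : IsJunction k M)
    {i : Fin f} (hi : i ∈ jsupp M) : jpartner M i ≠ i := by
  obtain ⟨e, he, hie⟩ := mem_jsupp.mp hi
  exact (pair_mem_of_mem hM he hie).1

lemma jpartner_invol {M : Finset (Finset (Fin f))} (hM : IsJunction k M)
    {i : Fin f} (hi : i ∈ jsupp M) : jpartner M (jpartner M i) = i := by
  obtain ⟨e, he, hie⟩ := mem_jsupp.mp hi
  obtain ⟨hne, hmem, -⟩ := pair_mem_of_mem hM he hie
  exact jpartner_eq hM he hmem hie hne.symm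

lemma jsupp_card {M : Finset (Finset (Fin f))} (hM : IsJunction k M) :
    (jsupp M).card = 2 * k := by
  rw [jsupp, card_biUnion (fun e he e' he' hne => hM.2.2 e he e' he' hne)]
  calc ∑ e ∈ M, e.card = ∑ e ∈ M, 2 := by
        refine Finset.sum_congr rfl fun e he => hM.2.1 e he
    _ = 2 * k := by rw [Finset.sum_const, smul_eq_mul, hM.1, mul_comm]

noncomputable def jcomplEquiv (Mj : {M : Finset (Finset (Fin f)) // IsJunction k M}) :
    ↥((jsupp Mj.1)ᶜ) ≃ Fin (f - 2 * k) :=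
  Fintype.equivFinOfCardEq (by
    rw [Fintype.card_coe, Finset.card_compl, jsupp_card Mj.2, Fintype.card_fin])

lemma jpair_mem {M : Finset (Finset (Fin f))} (hM : IsJunction k M)
    {i : Fin f} (hi : i ∈ jsupp M) : ({i, jpartner M i} : Finset (Fin f)) ∈ M := by
  obtain ⟨e, he, hie⟩ := mem_jsupp.mp hi
  rw [(pair_mem_of_mem hM he hie).2.2]
  exact he

abbrev Jset (f k : ℕ) := {M : Finset (Finset (Fin f)) // IsJunction k M}

noncomputable def toFunAux (π : Equiv.Perm (Fin (f - 2 * k))) (Tj Bj : Jset f k) :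
    Fin f ⊕ Fin f → Fin f ⊕ Fin f
  | .inl i =>
      if h : i ∈ jsupp Tj.1 then .inl (jpartner Tj.1 i)
      else .inr ((jcomplEquiv Bj).symm (π (jcomplEquiv Tj ⟨i, by simpa using h⟩)))
  | .inr j =>
      if h : j ∈ jsupp Bj.1 then .inr (jpartner Bj.1 j)
      else .inl ((jcomplEquiv Tj).symm (π⁻¹ (jcomplEquiv Bj ⟨j, by simpa using h⟩)))

lemma coe_jcomplEquiv_symm_not_mem (Mj : Jset f k) (x : Fin (f - 2 * k)) :
    ((jcomplEquiv Mj).symm x : Fin f) ∉ jsupp Mj.1 := by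
  exact Finset.mem_compl.mp ((jcomplEquiv Mj).symm x).2

lemma toFunAux_invol (π : Equiv.Perm (Fin (f - 2 * k))) (Tj Bj : Jset f k) :
    ∀ v, toFunAux π Tj Bj (toFunAux π Tj Bj v) = v := by
  rintro (i | j)
  · by_cases h : i ∈ jsupp Tj.1
    · rw [toFunAux, dif_pos h, toFunAux, dif_pos (jpartner_mem_jsupp Tj.2 h),
        jpartner_invol Tj.2 h]
    · rw [toFunAux, dif_neg h, toFunAux,
        dif_neg (coe_jcomplEquiv_symm_not_mem Bj _)]
      simp
  · by_cases h : j ∈ jsupp Bj.1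
    · rw [toFunAux, dif_pos h, toFunAux, dif_pos (jpartner_mem_jsupp Bj.2 h),
        jpartner_invol Bj.2 h]
    · rw [toFunAux, dif_neg h, toFunAux,
        dif_neg (coe_jcomplEquiv_symm_not_mem Tj _)]
      simp

noncomputable def toPerm (π : Equiv.Perm (Fin (f - 2 * k))) (Tj Bj : Jset f k) :
    Equiv.Perm (Fin f ⊕ Fin f) :=
  ⟨toFunAux π Tj Bj, toFunAux π Tj Bj, toFunAux_invol π Tj Bj, toFunAux_invol π Tj Bj⟩

lemma toPerm_isBrauer (π : Equiv.Perm (Fin (f - 2 * k))) (Tj Bj : Jset f k) :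
    IsBrauerDiagram (toPerm π Tj Bj) := by
  refine ⟨?_, toFunAux_invol π Tj Bj⟩
  rintro (i | j)
  · show toFunAux π Tj Bj (.inl i) ≠ .inl i
    by_cases h : i ∈ jsupp Tj.1
    · rw [toFunAux, dif_pos h]
      simpa using jpartner_ne Tj.2 h
    · rw [toFunAux, dif_neg h]; simp
  · show toFunAux π Tj Bj (.inr j) ≠ .inr j
    by_cases h : j ∈ jsupp Bj.1
    · rw [toFunAux, dif_pos h]
      simpa using jpartner_ne Bj.2 h
    · rw [toFunAux, dif_neg h]; simp

lemma toPerm_isLeft_iff (π : Equiv.Perm (Fin (f - 2 * k))) (Tj Bj : Jset f k) (i : Fin f) :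
    ((toPerm π Tj Bj) (Sum.inl i)).isLeft ↔ i ∈ jsupp Tj.1 := by
  show (toFunAux π Tj Bj (.inl i)).isLeft ↔ _
  by_cases h : i ∈ jsupp Tj.1
  · rw [toFunAux, dif_pos h]; simpa using h
  · rw [toFunAux, dif_neg h]; simpa using h

lemma toPerm_hasTopArcs (π : Equiv.Perm (Fin (f - 2 * k))) (Tj Bj : Jset f k) :
    HasTopArcs k (toPerm π Tj Bj) := by
  unfold HasTopArcs
  rw [Nat.card_congr (Equiv.subtypeEquivRight (toPerm_isLeft_iff π Tj Bj)),
    Nat.card_eq_fintype_card, Fintype.card_coe, jsupp_card Tj.2]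

lemma toPerm_apply_inl_mem (π : Equiv.Perm (Fin (f - 2 * k))) (Tj Bj : Jset f k)
    {i : Fin f} (h : i ∈ jsupp Tj.1) :
    (toPerm π Tj Bj) (Sum.inl i) = Sum.inl (jpartner Tj.1 i) := by
  show toFunAux π Tj Bj (.inl i) = _
  rw [toFunAux, dif_pos h]

lemma toPerm_apply_inl_not_mem (π : Equiv.Perm (Fin (f - 2 * k))) (Tj Bj : Jset f k)
    {i : Fin f} (h : i ∉ jsupp Tj.1) :
    (toPerm π Tj Bj) (Sum.inl i) =
      Sum.inr (((jcomplEquiv Bj).symm (π (jcomplEquiv Tj ⟨i, by simpa using h⟩)) : Fin f)) := by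
  show toFunAux π Tj Bj (.inl i) = _
  rw [toFunAux, dif_neg h]

lemma toPerm_apply_inr_mem (π : Equiv.Perm (Fin (f - 2 * k))) (Tj Bj : Jset f k)
    {j : Fin f} (h : j ∈ jsupp Bj.1) :
    (toPerm π Tj Bj) (Sum.inr j) = Sum.inr (jpartner Bj.1 j) := by
  show toFunAux π Tj Bj (.inr j) = _
  rw [toFunAux, dif_pos h]

lemma toPerm_apply_inr_not_mem (π : Equiv.Perm (Fin (f - 2 * k))) (Tj Bj : Jset f k)
    {j : Fin f} (h : j ∉ jsupp Bj.1) :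
    (toPerm π Tj Bj) (Sum.inr j) =
      Sum.inl (((jcomplEquiv Tj).symm (π⁻¹ (jcomplEquiv Bj ⟨j, by simpa using h⟩)) : Fin f)) := by
  show toFunAux π Tj Bj (.inr j) = _
  rw [toFunAux, dif_neg h]

lemma toPerm_isRight_iff (π : Equiv.Perm (Fin (f - 2 * k))) (Tj Bj : Jset f k) (j : Fin f) :
    ((toPerm π Tj Bj) (Sum.inr j)).isRight ↔ j ∈ jsupp Bj.1 := by
  by_cases h : j ∈ jsupp Bj.1
  · rw [toPerm_apply_inr_mem π Tj Bj h]; simpa using h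
  · rw [toPerm_apply_inr_not_mem π Tj Bj h]; simpa using h

lemma junction_subset {T T' : Finset (Finset (Fin f))}
    (hT : IsJunction k T) (hT' : IsJunction k T') (hsupp : jsupp T ⊆ jsupp T')
    (hp : ∀ i ∈ jsupp T, jpartner T i = jpartner T' i) : T ⊆ T' := by
  intro e he
  obtain ⟨a, b, hab, rfl⟩ := Finset.card_eq_two.mp (hT.2.1 e he)
  have ha : a ∈ jsupp T := mem_jsupp.mpr ⟨_, he, by simp⟩
  have hpa : jpartner T a = b :=
    jpartner_eq hT he (by simp) (by simp) hab.symm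
  have : ({a, b} : Finset (Fin f)) = {a, jpartner T' a} := by
    rw [← hp a ha, hpa]
  rw [this]
  exact jpair_mem hT' (hsupp ha)

lemma toPerm_injective :
    Function.Injective
      (fun x : Equiv.Perm (Fin (f - 2 * k)) × Jset f k × Jset f k =>
        toPerm x.1 x.2.1 x.2.2) := by
  rintro ⟨π, Tj, Bj⟩ ⟨π', Tj', Bj'⟩ hx
  simp only at hx
  have happ : ∀ v, (toPerm π Tj Bj) v = (toPerm π' Tj' Bj') v := fun v => by rw [hx]
  have hsuppT : jsupp Tj.1 = jsupp Tj'.1 := by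
    ext i
    rw [← toPerm_isLeft_iff π Tj Bj i, ← toPerm_isLeft_iff π' Tj' Bj' i, happ]
  have hsuppB : jsupp Bj.1 = jsupp Bj'.1 := by
    ext j
    rw [← toPerm_isRight_iff π Tj Bj j, ← toPerm_isRight_iff π' Tj' Bj' j, happ]
  have hpT : ∀ i ∈ jsupp Tj.1, jpartner Tj.1 i = jpartner Tj'.1 i := by
    intro i hi
    have := happ (Sum.inl i)
    rw [toPerm_apply_inl_mem π Tj Bj hi,
      toPerm_apply_inl_mem π' Tj' Bj' (hsuppT ▸ hi)] at this
    exact Sum.inl_injective this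
  have hpB : ∀ j ∈ jsupp Bj.1, jpartner Bj.1 j = jpartner Bj'.1 j := by
    intro j hj
    have := happ (Sum.inr j)
    rw [toPerm_apply_inr_mem π Tj Bj hj,
      toPerm_apply_inr_mem π' Tj' Bj' (hsuppB ▸ hj)] at this
    exact Sum.inr_injective this
  have hT : Tj = Tj' := Subtype.ext (Finset.Subset.antisymm
    (junction_subset Tj.2 Tj'.2 (le_of_eq hsuppT) hpT)
    (junction_subset Tj'.2 Tj.2 (le_of_eq hsuppT.symm)
      (fun i hi => (hpT i (hsuppT.symm ▸ hi)).symm)))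
  have hB : Bj = Bj' := Subtype.ext (Finset.Subset.antisymm
    (junction_subset Bj.2 Bj'.2 (le_of_eq hsuppB) hpB)
    (junction_subset Bj'.2 Bj.2 (le_of_eq hsuppB.symm)
      (fun j hj => (hpB j (hsuppB.symm ▸ hj)).symm)))
  subst hT; subst hB
  have hpi : π = π' := by
    ext x
    have hnm : ((jcomplEquiv Tj).symm x : Fin f) ∉ jsupp Tj.1 :=
      coe_jcomplEquiv_symm_not_mem Tj x
    have := happ (Sum.inl ((jcomplEquiv Tj).symm x : Fin f))
    rw [toPerm_apply_inl_not_mem π Tj Bj hnm, toPerm_apply_inl_not_mem π' Tj Bj hnm,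
      Subtype.coe_eta, Equiv.apply_symm_apply] at this
    exact congrArg Fin.val ((jcomplEquiv Bj).symm.injective (Subtype.coe_injective (Sum.inr_injective this)))
  rw [hpi]

lemma halfJunction (σ : Equiv.Perm (Fin f ⊕ Fin f)) (hfpf : ∀ v, σ v ≠ v)
    (hinv : ∀ v, σ (σ v) = v)
    (hcard : (univ.filter fun i => (σ (Sum.inl i)).isLeft).card = 2 * k) :
    ∃ M : Finset (Finset (Fin f)), IsJunction k M ∧
      jsupp M = univ.filter (fun i => (σ (Sum.inl i)).isLeft) ∧
      ∀ i ∈ jsupp M, σ (Sum.inl i) = Sum.inl (jpartner M i) := by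
  set T : Finset (Fin f) := univ.filter fun i => (σ (Sum.inl i)).isLeft with hT
  set lf : Fin f → Fin f := fun i => Sum.elim id (fun _ => i) (σ (Sum.inl i)) with hlfdef
  have hlf : ∀ i ∈ T, σ (Sum.inl i) = Sum.inl (lf i) := by
    intro i hi
    rw [hT, mem_filter] at hi
    obtain ⟨y, hy⟩ := Sum.isLeft_iff.mp hi.2
    rw [hy]; simp [hlfdef, hy]
  have hlfT : ∀ i ∈ T, lf i ∈ T := by
    intro i hi
    rw [hT, mem_filter]
    refine ⟨mem_univ _, ?_⟩
    have : σ (Sum.inl (lf i)) = Sum.inl i := by rw [← hlf i hi, hinv]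
    rw [this]; rfl
  have hlfne : ∀ i ∈ T, lf i ≠ i := by
    intro i hi hc
    exact hfpf (Sum.inl i) (by rw [hlf i hi, hc])
  have hlflf : ∀ i ∈ T, lf (lf i) = i := by
    intro i hi
    have h1 : σ (Sum.inl (lf i)) = Sum.inl i := by rw [← hlf i hi, hinv]
    have := hlf (lf i) (hlfT i hi)
    rw [h1] at this
    exact (Sum.inl_injective this).symm
  set TJ : Finset (Finset (Fin f)) := T.image (fun i => {i, lf i}) with hTJ
  have hcl : ∀ e ∈ TJ, ∀ x ∈ e, x ∈ T ∧ e = {x, lf x} := by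
    intro e he x hx
    rw [hTJ, mem_image] at he
    obtain ⟨i, hi, rfl⟩ := he
    rcases Finset.mem_insert.mp hx with rfl | hx
    · exact ⟨hi, rfl⟩
    · rw [Finset.mem_singleton] at hx
      subst hx
      exact ⟨hlfT i hi, by rw [hlflf i hi, Finset.pair_comm]⟩
  have hcards : ∀ e ∈ TJ, e.card = 2 := by
    intro e he
    rw [hTJ, mem_image] at he
    obtain ⟨i, hi, rfl⟩ := he
    exact Finset.card_pair (hlfne i hi).symm
  have hdisj : ∀ e ∈ TJ, ∀ e' ∈ TJ, e ≠ e' → Disjoint e e' := by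
    intro e he e' he' hne
    by_contra hc
    obtain ⟨x, hx, hx'⟩ := Finset.not_disjoint_iff.mp hc
    exact hne (((hcl e he x hx).2).trans ((hcl e' he' x hx').2).symm)
  have hfiber : ∀ e ∈ TJ, T.filter (fun i => ({i, lf i} : Finset (Fin f)) = e) = e := by
    intro e he
    ext x
    rw [mem_filter]
    constructor
    · rintro ⟨hxT, rfl⟩
      simp
    · intro hx
      exact ⟨(hcl e he x hx).1, ((hcl e he x hx).2).symm⟩
  have hTJcard : TJ.card = k := by
    have h1 := Finset.card_eq_sum_card_image (fun i => ({i, lf i} : Finset (Fin f))) T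
    rw [← hTJ] at h1
    have h2 : ∑ e ∈ TJ, (T.filter (fun i => ({i, lf i} : Finset (Fin f)) = e)).card
        = ∑ e ∈ TJ, 2 := by
      refine Finset.sum_congr rfl fun e he => ?_
      rw [hfiber e he, hcards e he]
    rw [h2, Finset.sum_const, smul_eq_mul, hcard] at h1
    omega
  have hjunc : IsJunction k TJ := ⟨hTJcard, hcards, hdisj⟩
  have hsupp : jsupp TJ = T := by
    ext x
    rw [mem_jsupp]
    constructor
    · rintro ⟨e, he, hx⟩
      exact (hcl e he x hx).1
    · intro hx
      exact ⟨{x, lf x}, Finset.mem_image_of_mem _ hx, by simp⟩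
  refine ⟨TJ, hjunc, hsupp, ?_⟩
  intro i hi
  rw [hsupp] at hi
  have hpair : ({i, lf i} : Finset (Fin f)) ∈ TJ := Finset.mem_image_of_mem _ hi
  have : jpartner TJ i = lf i :=
    jpartner_eq hjunc hpair (by simp) (by simp) (hlfne i hi)
  rw [this]
  exact hlf i hi

lemma toPerm_surjective (h : 2 * k ≤ f) (σ : Equiv.Perm (Fin f ⊕ Fin f))
    (hfpf : ∀ v, σ v ≠ v) (hinv : ∀ v, σ (σ v) = v) (htop : HasTopArcs k σ) :
    ∃ π : Equiv.Perm (Fin (f - 2 * k)), ∃ Tj Bj : Jset f k, toPerm π Tj Bj = σ := by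
  classical
  -- the conjugated permutation acting on the bottom row
  set σ' : Equiv.Perm (Fin f ⊕ Fin f) :=
    (Equiv.sumComm (Fin f) (Fin f)).trans (σ.trans (Equiv.sumComm (Fin f) (Fin f))) with hσ'
  have hσ'app : ∀ v, σ' v = (Equiv.sumComm (Fin f) (Fin f)) (σ ((Equiv.sumComm (Fin f) (Fin f)) v)) :=
    fun v => rfl
  have hσ'fpf : ∀ v, σ' v ≠ v := by
    intro v hc
    rw [hσ'app] at hc
    have h2 := congrArg (Equiv.sumComm (Fin f) (Fin f)).symm hc
    rw [Equiv.symm_apply_apply] at h2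
    rw [Equiv.sumComm_symm] at h2
    exact hfpf _ h2
  have hσ'inv : ∀ v, σ' (σ' v) = v := by
    intro v
    rw [hσ'app, hσ'app]
    simp [hinv]
  have hσ'left : ∀ j, (σ' (Sum.inl j)).isLeft = (σ (Sum.inr j)).isRight := by
    intro j
    rw [hσ'app]
    rcases hx : σ ((Equiv.sumComm (Fin f) (Fin f)) (Sum.inl j)) with y | y
    · simp at hx; simp [hx]
    · simp at hx; simp [hx]
  have hTcard : (univ.filter fun i => (σ (Sum.inl i)).isLeft).card = 2 * k := by
    have := htop
    unfold HasTopArcs at this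
    rwa [Nat.card_eq_fintype_card, Fintype.card_subtype] at this
  -- bijection between non-arc top vertices and non-arc bottom vertices
  set rf : Fin f → Fin f := fun i => Sum.elim (fun _ => i) id (σ (Sum.inl i)) with hrf
  set lb : Fin f → Fin f := fun j => Sum.elim id (fun _ => j) (σ (Sum.inr j)) with hlb
  have hrfspec : ∀ i : Fin f, ¬ (σ (Sum.inl i)).isLeft → σ (Sum.inl i) = Sum.inr (rf i) := by
    intro i hi
    rw [Sum.not_isLeft] at hi
    obtain ⟨y, hy⟩ := Sum.isRight_iff.mp hi
    rw [hy]; simp [hrf, hy]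
  have hlbspec : ∀ j : Fin f, ¬ (σ (Sum.inr j)).isRight → σ (Sum.inr j) = Sum.inl (lb j) := by
    intro j hj
    rw [Sum.not_isRight] at hj
    obtain ⟨y, hy⟩ := Sum.isLeft_iff.mp hj
    rw [hy]; simp [hlb, hy]
  have hrfmem : ∀ i : Fin f, ¬ (σ (Sum.inl i)).isLeft → ¬ (σ (Sum.inr (rf i))).isRight := by
    intro i hi
    have h1 : σ (Sum.inr (rf i)) = Sum.inl i := by rw [← hrfspec i hi, hinv]
    rw [h1]; simp
  have hlbmem : ∀ j : Fin f, ¬ (σ (Sum.inr j)).isRight → ¬ (σ (Sum.inl (lb j))).isLeft := by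
    intro j hj
    have h1 : σ (Sum.inl (lb j)) = Sum.inr j := by rw [← hlbspec j hj, hinv]
    rw [h1]; simp
  have hlbrf : ∀ i : Fin f, ¬ (σ (Sum.inl i)).isLeft → lb (rf i) = i := by
    intro i hi
    have h1 : σ (Sum.inr (rf i)) = Sum.inl i := by rw [← hrfspec i hi, hinv]
    simp [hlb, h1]
  have hrflb : ∀ j : Fin f, ¬ (σ (Sum.inr j)).isRight → rf (lb j) = j := by
    intro j hj
    have h1 : σ (Sum.inl (lb j)) = Sum.inr j := by rw [← hlbspec j hj, hinv]
    simp [hrf, h1]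
  set φ0 : {i : Fin f // ¬ (σ (Sum.inl i)).isLeft} ≃ {j : Fin f // ¬ (σ (Sum.inr j)).isRight} :=
    { toFun := fun x => ⟨rf x.1, hrfmem x.1 x.2⟩
      invFun := fun y => ⟨lb y.1, hlbmem y.1 y.2⟩
      left_inv := fun x => Subtype.ext (hlbrf x.1 x.2)
      right_inv := fun y => Subtype.ext (hrflb y.1 y.2) } with hφ0
  have hBcard : (univ.filter fun j => (σ' (Sum.inl j)).isLeft).card = 2 * k := by
    have hc1 : (univ.filter fun i => ¬ (σ (Sum.inl i)).isLeft).card = f - 2 * k := by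
      have := Finset.card_filter_add_card_filter_not
        (s := (univ : Finset (Fin f))) (p := fun i => (σ (Sum.inl i)).isLeft)
      rw [hTcard, Finset.card_univ, Fintype.card_fin] at this
      omega
    have hc2 : (univ.filter fun j => ¬ (σ (Sum.inr j)).isRight).card = f - 2 * k := by
      have hcg := Fintype.card_congr φ0
      rw [Fintype.card_subtype, Fintype.card_subtype, hc1] at hcg
      exact hcg.symm
    have hc3 := Finset.card_filter_add_card_filter_not
      (s := (univ : Finset (Fin f))) (p := fun j => (σ (Sum.inr j)).isRight)
    rw [Finset.card_univ, Fintype.card_fin] at hc3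
    have hc4 : (univ.filter fun j => (σ (Sum.inr j)).isRight).card = 2 * k := by omega
    rw [← hc4]
    congr 1
    ext j
    simp [hσ'left j]
  obtain ⟨TJ, hjT, hsuppT, hpT⟩ := halfJunction σ hfpf hinv hTcard
  obtain ⟨BJ, hjB, hsuppB, hpB'⟩ := halfJunction σ' hσ'fpf hσ'inv hBcard
  have hpB : ∀ j ∈ jsupp BJ, σ (Sum.inr j) = Sum.inr (jpartner BJ j) := by
    intro j hj
    have h1 := hpB' j hj
    rw [hσ'app] at h1
    have h2 := congrArg (Equiv.sumComm (Fin f) (Fin f)) h1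
    simpa using h2
  have hmemT : ∀ i : Fin f, i ∈ jsupp TJ ↔ (σ (Sum.inl i)).isLeft := by
    intro i; rw [hsuppT, mem_filter]; simp only [mem_univ, true_and]
  have hmemB : ∀ j : Fin f, j ∈ jsupp BJ ↔ (σ (Sum.inr j)).isRight := by
    intro j; rw [hsuppB, mem_filter, hσ'left j]; simp only [mem_univ, true_and]
  set TJs : Jset f k := ⟨TJ, hjT⟩ with hTJs
  set BJs : Jset f k := ⟨BJ, hjB⟩ with hBJs
  set castT : ↥((jsupp TJs.1)ᶜ) ≃ {i : Fin f // ¬ (σ (Sum.inl i)).isLeft} :=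
    Equiv.subtypeEquivRight (fun i => by
      rw [Finset.mem_compl, hmemT i]) with hcastT
  set castB : {j : Fin f // ¬ (σ (Sum.inr j)).isRight} ≃ ↥((jsupp BJs.1)ᶜ) :=
    Equiv.subtypeEquivRight (fun j => by
      rw [Finset.mem_compl, hmemB j]) with hcastB
  set π : Equiv.Perm (Fin (f - 2 * k)) :=
    (jcomplEquiv TJs).symm.trans (castT.trans (φ0.trans (castB.trans (jcomplEquiv BJs)))) with hπ
  refine ⟨π, TJs, BJs, ?_⟩
  ext v
  rcases v with i | j
  · by_cases hi : i ∈ jsupp TJs.1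
    · rw [toPerm_apply_inl_mem π TJs BJs hi]
      exact (hpT i hi).symm
    · rw [toPerm_apply_inl_not_mem π TJs BJs hi]
      have hnl : ¬ (σ (Sum.inl i)).isLeft := fun hc => hi ((hmemT i).mpr hc)
      rw [hrfspec i hnl]
      congr 1
      rw [hπ]
      simp only [Equiv.trans_apply, Equiv.symm_apply_apply]
      simp [hcastT, hcastB, hφ0, Equiv.subtypeEquivRight]
      rfl
  · by_cases hj : j ∈ jsupp BJs.1
    · rw [toPerm_apply_inr_mem π TJs BJs hj]
      exact (hpB j hj).symm
    · rw [toPerm_apply_inr_not_mem π TJs BJs hj]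
      have hnr : ¬ (σ (Sum.inr j)).isRight := fun hc => hj ((hmemB j).mpr hc)
      rw [hlbspec j hnr]
      congr 1
      rw [hπ]
      simp only [Equiv.Perm.inv_def, Equiv.symm_trans_apply, Equiv.symm_symm,
        Equiv.symm_apply_apply]
      simp [hcastT, hcastB, hφ0, Equiv.subtypeEquivRight]
      rfl

noncomputable def Psi (f k : ℕ) :
    (Equiv.Perm (Fin (f - 2 * k)) × Jset f k × Jset f k) →
      {σ : Equiv.Perm (Fin f ⊕ Fin f) // IsBrauerDiagram σ ∧ HasTopArcs k σ} :=
  fun x => ⟨toPerm x.1 x.2.1 x.2.2, toPerm_isBrauer x.1 x.2.1 x.2.2,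
    toPerm_hasTopArcs x.1 x.2.1 x.2.2⟩

lemma Psi_bijective (f k : ℕ) (h : 2 * k ≤ f) : Function.Bijective (Psi f k) := by
  constructor
  · intro x y hxy
    exact toPerm_injective (congrArg Subtype.val hxy)
  · rintro ⟨σ, ⟨hfpf, hinv⟩, htop⟩
    obtain ⟨π, Tj, Bj, hx⟩ := toPerm_surjective h σ hfpf hinv htop
    exact ⟨(π, Tj, Bj), Subtype.ext hx⟩

end BrauerAux

/-- There is a bijection
`D_{f,k} ≃ S_{f-2k} × J_{f,k} × J_{f,k}`. -/
theorem diagrams_equiv_perm_junctions (f k : ℕ) (h : 2 * k ≤ f) :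
    Nonempty
      ({σ : Equiv.Perm (Fin f ⊕ Fin f) // IsBrauerDiagram σ ∧ HasTopArcs k σ} ≃
        Equiv.Perm (Fin (f - 2 * k)) ×
          {M : Finset (Finset (Fin f)) // IsJunction k M} ×
          {M : Finset (Finset (Fin f)) // IsJunction k M}) :=
  ⟨(Equiv.ofBijective _ (BrauerAux.Psi_bijective f k h)).symm⟩
end

section
/- Let A be a generalized matrix algebra over a field k with basis {e_{ij}}_{i,j ∈ I} and structure constants σ*_{jp} (so e_{ij}·e_{pq} = σ*_{jp} e_{iq}), and let Φ(A) = (σ*_{ij}) be the matrix of structure constants. Then the set of properly nilpotent elements of A is a two-sided ideal of dimension |I|² − rank(Φ(A))². -/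
/-- The multiplication of a generalized matrix algebra with basis
`{e_{ij}}_{i,j ∈ I}` and structure constants matrix `Φ = (σ*_{ij})`:
identifying `∑ x_{ij} e_{ij}` with the matrix `x`, the rule
`e_{ij}·e_{pq} = σ*_{jp} e_{iq}` reads `x ⋆ y = x * Φ * y`. -/
def gmaMul {k I : Type*} [Field k] [Fintype I] [DecidableEq I]
    (Φ : Matrix I I k) (x y : Matrix I I k) : Matrix I I k :=
  x * Φ * y

/-- Iterated powers `x, x⋆x, x⋆x⋆x, …` in the generalized matrix algebra. -/
def gmaPow {k I : Type*} [Field k] [Fintype I] [DecidableEq I]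
    (Φ : Matrix I I k) (x : Matrix I I k) : ℕ → Matrix I I k
  | 0 => x
  | n + 1 => gmaMul Φ (gmaPow Φ x n) x

/-- `x` is properly nilpotent: `a ⋆ x` is nilpotent for every `a`. -/
def GmaProperlyNilpotent {k I : Type*} [Field k] [Fintype I] [DecidableEq I]
    (Φ : Matrix I I k) (x : Matrix I I k) : Prop :=
  ∀ a : Matrix I I k, ∃ n : ℕ, gmaPow Φ (gmaMul Φ a x) n = 0

section Aux
variable {k I : Type*} [Field k] [Fintype I] [DecidableEq I]

private lemma mul_pow_swap {R : Type*} [Monoid R] (u v : R) :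
    ∀ m : ℕ, (u * v) ^ (m + 1) = u * ((v * u) ^ m * v)
  | 0 => by simp
  | m + 1 => by
    rw [pow_succ, mul_pow_swap u v m, pow_succ]
    simp [mul_assoc]

lemma gmaPow_eq (Φ x : Matrix I I k) (n : ℕ) :
    gmaPow Φ x n = x * (Φ * x) ^ n := by
  induction n with
  | zero => simp [gmaPow]
  | succ n ih =>
    show gmaMul Φ (gmaPow Φ x n) x = _
    rw [ih, gmaMul, pow_succ]
    simp [mul_assoc]

lemma properlyNilpotent_iff (Φ x : Matrix I I k) :
    GmaProperlyNilpotent Φ x ↔ Φ * x * Φ = 0 := by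
  constructor
  · intro h
    by_contra hB
    set B : Matrix I I k := Φ * x * Φ with hBdef
    have hex : ∃ i j, B i j ≠ 0 := by
      by_contra hcon
      push_neg at hcon
      exact hB (by ext i j; simpa using hcon i j)
    obtain ⟨i, j, hij⟩ := hex
    set c : k := (B i j)⁻¹ with hc
    set a : Matrix I I k := c • Matrix.single j i 1 with ha
    set M : Matrix I I k := B * a with hM
    have hMapply : ∀ p q, M p q = if q = i then c * B p j else 0 := by
      intro p q
      rw [hM, ha, Matrix.mul_smul, Matrix.smul_apply, smul_eq_mul]
      by_cases hq : q = i
      · subst hq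
        rw [Matrix.mul_single_apply_same, mul_one, if_pos rfl]
      · rw [Matrix.mul_single_apply_of_ne 1 j i p q hq, mul_zero, if_neg hq]
    have hMidem : M * M = M := by
      ext p q
      rw [Matrix.mul_apply, Finset.sum_eq_single i]
      · rw [hMapply p i, hMapply i q, hMapply p q, if_pos rfl]
        by_cases hq : q = i
        · rw [if_pos hq, if_pos hq]
          have : c * B i j = 1 := inv_mul_cancel₀ hij
          calc c * B p j * (c * B i j) = c * B p j * 1 := by rw [this]
            _ = c * B p j := mul_one _
        · rw [if_neg hq, if_neg hq, mul_zero]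
      · intro b _ hb
        rw [hMapply p b, if_neg hb, zero_mul]
      · simp
    obtain ⟨n, hn⟩ := h a
    rw [gmaPow_eq, gmaMul] at hn
    have hv : (Φ * (a * Φ * x)) ^ (n + 1) = 0 := by
      rw [pow_succ']
      calc Φ * (a * Φ * x) * (Φ * (a * Φ * x)) ^ n
          = Φ * (a * Φ * x * (Φ * (a * Φ * x)) ^ n) := by rw [mul_assoc]
        _ = 0 := by rw [hn, mul_zero]
    have hMpow : M ^ (n + 2) = 0 := by
      have hMuv : M = (Φ * x) * (Φ * a) := by
        rw [hM, hBdef]; simp [mul_assoc]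
      have hvu : (Φ * a) * (Φ * x) = Φ * (a * Φ * x) := by
        simp [mul_assoc]
      have : (n : ℕ) + 2 = (n + 1) + 1 := rfl
      rw [hMuv, this, mul_pow_swap, hvu, hv, zero_mul, mul_zero]
    have hMpow' : ∀ m : ℕ, M ^ (m + 1) = M := by
      intro m
      induction m with
      | zero => simp
      | succ m ih => rw [pow_succ, ih, hMidem]
    have hM0 : M = 0 := by
      have := hMpow' (n + 1)
      rw [show (n : ℕ) + 1 + 1 = n + 2 from rfl, hMpow] at this
      exact this.symm
    have hMii : M i i = 1 := by
      rw [hMapply i i, if_pos rfl, hc, inv_mul_cancel₀ hij]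
    rw [hM0] at hMii
    simp at hMii
  · intro hx a
    refine ⟨1, ?_⟩
    rw [gmaPow_eq, gmaMul, pow_one]
    calc a * Φ * x * (Φ * (a * Φ * x)) = a * (Φ * x * Φ) * (a * Φ * x) := by
          simp [mul_assoc]
      _ = 0 := by rw [hx, mul_zero, zero_mul]

end Aux

/-- In a generalized matrix algebra `A` with structure-constants matrix
`Φ(A)`, the set of properly nilpotent elements is a two-sided ideal of
dimension `|I|² − rank(Φ(A))²`. -/
theorem gma_radical_dim {k I : Type*} [Field k] [Fintype I] [DecidableEq I]
    (Φ : Matrix I I k) :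
    ∃ S : Submodule k (Matrix I I k),
      (S : Set (Matrix I I k)) = {x | GmaProperlyNilpotent Φ x} ∧
      (∀ a : Matrix I I k, ∀ x ∈ S, gmaMul Φ a x ∈ S ∧ gmaMul Φ x a ∈ S) ∧
      Module.finrank k S = Fintype.card I ^ 2 - Φ.rank ^ 2 := by
  classical
  set f : (I → k) →ₗ[k] (I → k) := Φ.mulVecLin with hf
  set R : Submodule k (I → k) := LinearMap.range f with hR
  set K : Submodule k (I → k) := LinearMap.ker f with hK
  set Ψ : Matrix I I k →ₗ[k] (↥R →ₗ[k] ((I → k) ⧸ K)) :=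
    { toFun := fun x => K.mkQ ∘ₗ x.mulVecLin ∘ₗ R.subtype
      map_add' := fun x y => by
        ext v
        simp [Matrix.mulVecLin_add]
      map_smul' := fun cc x => by
        ext v
        simp [Matrix.smul_mulVec] } with hΨ
  -- membership characterization
  have hker : ∀ x : Matrix I I k, Ψ x = 0 ↔ Φ * x * Φ = 0 := by
    intro x
    constructor
    · intro hx
      have h1 : ∀ v : ↥R, Φ.mulVec (x.mulVec ↑v) = 0 := by
        intro v
        have := congrFun (congrArg DFunLike.coe hx) v
        simp only [hΨ, LinearMap.coe_mk, AddHom.coe_mk, LinearMap.comp_apply,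
          Submodule.coe_subtype, Submodule.mkQ_apply, LinearMap.zero_apply] at this
        have h2 : x.mulVecLin ↑v ∈ K := (Submodule.Quotient.mk_eq_zero K).mp this
        simpa [hK, hf] using h2
      have h3 : ∀ w : I → k, (Φ * x * Φ).mulVec w = 0 := by
        intro w
        have hw : Φ.mulVec w ∈ R := ⟨w, rfl⟩
        have := h1 ⟨Φ.mulVec w, hw⟩
        rw [mul_assoc]
        simpa [Matrix.mulVec_mulVec] using this
      apply Matrix.toLin'.injective
      rw [map_zero]
      refine LinearMap.ext fun w => ?_
      rw [Matrix.toLin'_apply, h3 w, LinearMap.zero_apply]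
    · intro hx
      ext v
      obtain ⟨w, hw⟩ := v.2
      simp only [hΨ, LinearMap.coe_mk, AddHom.coe_mk, LinearMap.comp_apply,
        Submodule.coe_subtype, Submodule.mkQ_apply, LinearMap.zero_apply]
      rw [Submodule.Quotient.mk_eq_zero]
      show x.mulVec ↑v ∈ K
      have : Φ.mulVec (x.mulVec ↑v) = 0 := by
        rw [← hw]
        show Φ.mulVec (x.mulVec (f w)) = 0
        have : Φ.mulVec (x.mulVec (Φ.mulVec w)) = (Φ * x * Φ).mulVec w := by
          rw [Matrix.mulVec_mulVec, Matrix.mulVec_mulVec]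
        simpa [hf, this, hx] using this.trans (by rw [hx]; simp)
      simpa [hK, hf] using this
  refine ⟨LinearMap.ker Ψ, ?_, ?_, ?_⟩
  · ext x
    simp only [SetLike.mem_coe, LinearMap.mem_ker, Set.mem_setOf_eq,
      properlyNilpotent_iff, hker]
  · intro a x hx
    rw [LinearMap.mem_ker, hker] at hx
    constructor
    · rw [LinearMap.mem_ker, hker, gmaMul]
      calc Φ * (a * Φ * x) * Φ = Φ * a * (Φ * x * Φ) := by simp [mul_assoc]
        _ = 0 := by rw [hx, mul_zero]
    · rw [LinearMap.mem_ker, hker, gmaMul]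
      calc Φ * (x * Φ * a) * Φ = Φ * x * Φ * (a * Φ) := by simp [mul_assoc]
        _ = 0 := by rw [hx, zero_mul]
  · -- dimension count
    have hsurj : Function.Surjective Ψ := by
      intro h
      obtain ⟨R', hR'⟩ := Submodule.exists_isCompl R
      obtain ⟨s, hs⟩ := K.mkQ.exists_rightInverse_of_surjective
        (LinearMap.range_eq_top.mpr (Submodule.mkQ_surjective K))
      set π := R.linearProjOfIsCompl R' hR'
      refine ⟨LinearMap.toMatrix' ((s ∘ₗ h) ∘ₗ π), ?_⟩
      ext v
      simp only [hΨ, LinearMap.coe_mk, AddHom.coe_mk, LinearMap.comp_apply,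
        Submodule.coe_subtype, Submodule.mkQ_apply]
      have h1 : (LinearMap.toMatrix' ((s ∘ₗ h) ∘ₗ π)).mulVecLin = (s ∘ₗ h) ∘ₗ π := by
        rw [← Matrix.toLin'_apply']
        exact Matrix.toLin'_toMatrix' _
      rw [h1]
      have h2 : π ↑v = v := Submodule.linearProjOfIsCompl_apply_left hR' v
      have h3 : K.mkQ (s (h v)) = h v := by
        have := congrFun (congrArg DFunLike.coe hs) (h v)
        simpa using this
      simp only [LinearMap.comp_apply, h2]
      exact h3
    have hRfin : Module.finrank k R = Φ.rank := by rw [Matrix.rank, hR, hf]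
    have hQfin : Module.finrank k ((I → k) ⧸ K) = Φ.rank := by
      have e1 := Submodule.finrank_quotient_add_finrank K
      have e2 := LinearMap.finrank_range_add_finrank_ker f
      rw [← hR, ← hK] at e2
      rw [hRfin] at e2
      omega
    have hhom : Module.finrank k (↥R →ₗ[k] ((I → k) ⧸ K)) = Φ.rank * Φ.rank := by
      rw [Module.finrank_linearMap, hRfin, hQfin]
    have e3 := LinearMap.finrank_range_add_finrank_ker Ψ
    have e4 : Module.finrank k (LinearMap.range Ψ) = Φ.rank * Φ.rank := by
      rw [LinearMap.range_eq_top.mpr hsurj, finrank_top, hhom]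
    have e5 : Module.finrank k (Matrix I I k) = Fintype.card I * Fintype.card I := by
      simp [Module.finrank_matrix]
    rw [e4, e5] at e3
    have : Module.finrank k (LinearMap.ker Ψ) =
        Fintype.card I * Fintype.card I - Φ.rank * Φ.rank := by omega
    rw [this, pow_two, pow_two]
end
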